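/- Let G be a 3-regular bipartite graph with parts A and B, where B = {b_1, ..., b_n}. Then G has a labeling (bijection from E(G) to {1,...,3n}) such that for each i the vertex-sum at b_i equals 3n + 3i, and for each i exactly one vertex of A has vertex-sum 3n + 3i. -/

import Mathlib

open Finset

/-- The vertex-sum of `v` under edge labeling `f`: the sum of labels on edges incident to `v`. -/
def vertexSum {V : Type*} [Fintype V] [DecidableEq V] (G : SimpleGraph V)
    [DecidableRel G.Adj] (f : Sym2 V → ℕ) (v : V) : ℕ :=
  ∑ e ∈ G.incidenceFinset v, f e

/-- A graph is antimagic if some bijective labeling of its edges by `{1, …, |E(G)|}`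
has pairwise distinct vertex-sums. -/
def IsAntimagic {V : Type*} [Fintype V] [DecidableEq V] (G : SimpleGraph V)
    [DecidableRel G.Adj] : Prop :=
  ∃ f : Sym2 V → ℕ,
    Set.BijOn f ↑G.edgeFinset ↑(Finset.Icc 1 G.edgeFinset.card) ∧
    ∀ u v : V, u ≠ v → vertexSum G f u ≠ vertexSum G f v

/-- Double counting: Hall's condition for (sub)regular set families. -/
lemma hall_cond {ι α : Type*} [Fintype ι] [DecidableEq ι] [Fintype α] [DecidableEq α]
    (t : ι → Finset α) (k : ℕ) (hk : 0 < k) (hcard : ∀ i, k ≤ (t i).card)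
    (hcount : ∀ a : α, ((univ : Finset ι).filter (fun i => a ∈ t i)).card ≤ k) :
    ∀ s : Finset ι, s.card ≤ (s.biUnion t).card := by
  intro s
  have key : k * s.card ≤ k * (s.biUnion t).card := by
    calc k * s.card = ∑ i ∈ s, k := by rw [Finset.sum_const, smul_eq_mul, mul_comm]
    _ ≤ ∑ i ∈ s, (t i).card := Finset.sum_le_sum (fun i _ => hcard i)
    _ = ∑ i ∈ s, ((s.biUnion t).filter (fun a => a ∈ t i)).card := by
        refine Finset.sum_congr rfl (fun i hi => ?_)
        congr 1
        ext a
        simp only [Finset.mem_filter, Finset.mem_biUnion]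
        exact ⟨fun ha => ⟨⟨i, hi, ha⟩, ha⟩, fun ha => ha.2⟩
    _ = ∑ i ∈ s, ∑ a ∈ s.biUnion t, (if a ∈ t i then 1 else 0) := by
        refine Finset.sum_congr rfl (fun i _ => ?_)
        rw [Finset.card_filter]
    _ = ∑ a ∈ s.biUnion t, ∑ i ∈ s, (if a ∈ t i then 1 else 0) := Finset.sum_comm
    _ = ∑ a ∈ s.biUnion t, (s.filter (fun i => a ∈ t i)).card := by
        refine Finset.sum_congr rfl (fun a _ => ?_)
        rw [Finset.card_filter]
    _ ≤ ∑ a ∈ s.biUnion t, k := by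
        refine Finset.sum_le_sum (fun a _ => ?_)
        exact le_trans (Finset.card_le_card
          (Finset.filter_subset_filter _ (Finset.subset_univ s))) (hcount a)
    _ = k * (s.biUnion t).card := by rw [Finset.sum_const, smul_eq_mul, mul_comm]
  exact Nat.le_of_mul_le_mul_left key hk

/-- Incidence finset as image of the neighbor finset. -/
lemma incidence_eq_image {V : Type*} [Fintype V] [DecidableEq V] (G : SimpleGraph V)
    [DecidableRel G.Adj] (v : V) :
    G.incidenceFinset v = (G.neighborFinset v).image (fun w => s(v, w)) := by
  ext e
  rw [SimpleGraph.mem_incidenceFinset]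
  constructor
  · intro he
    induction e with
    | _ u w =>
      rw [SimpleGraph.mk'_mem_incidenceSet_iff] at he
      obtain ⟨hadj, h | h⟩ := he
      · subst h
        exact Finset.mem_image.2 ⟨w, SimpleGraph.mem_neighborFinset _ _ _ |>.2 hadj, rfl⟩
      · subst h
        refine Finset.mem_image.2 ⟨u, SimpleGraph.mem_neighborFinset _ _ _ |>.2 hadj.symm, ?_⟩
        exact Sym2.eq_swap
  · intro he
    obtain ⟨w, hw, rfl⟩ := Finset.mem_image.1 he
    rw [SimpleGraph.mem_neighborFinset] at hw
    exact (SimpleGraph.mk'_mem_incidenceSet_left_iff _).2 hw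


/-- vertexSum as a sum over neighbors. -/
lemma vertexSum_eq_sum_neighbors {V : Type*} [Fintype V] [DecidableEq V] (G : SimpleGraph V)
    [DecidableRel G.Adj] (f : Sym2 V → ℕ) (v : V) :
    vertexSum G f v = ∑ w ∈ G.neighborFinset v, f s(v, w) := by
  unfold vertexSum
  rw [incidence_eq_image]
  rw [Finset.sum_image]
  intro x _ y _ hxy
  rcases (Sym2.mk_eq_mk_iff (p := (v, x)) (q := (v, y))).1 hxy with h | h
  · exact congrArg Prod.snd h
  · have h1 : v = y := congrArg Prod.fst h
    have h2 : x = v := congrArg Prod.snd h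
    exact h2.trans h1

theorem stmt_11 {V : Type*} [Fintype V] [DecidableEq V] (G : SimpleGraph V)
    [DecidableRel G.Adj] (n : ℕ) (A B : Finset V)
    (hdisj : Disjoint A B) (hcover : A ∪ B = Finset.univ)
    (hbip : ∀ u v, G.Adj u v → (u ∈ A ↔ v ∈ B))
    (hreg : G.IsRegularOfDegree 3)
    (hB : B.card = n) (b : Fin n → V) (hbmem : ∀ i, b i ∈ B)
    (hbinj : Function.Injective b) :
    ∃ f : Sym2 V → ℕ, Set.BijOn f ↑G.edgeFinset ↑(Finset.Icc 1 (3 * n)) ∧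
      (∀ i : Fin n, vertexSum G f (b i) = 3 * n + 3 * (i.val + 1)) ∧
      ∀ i : Fin n, ∃! a, a ∈ A ∧ vertexSum G f a = 3 * n + 3 * (i.val + 1) := by
  classical
  -- basic membership facts
  have hnotA : ∀ v ∈ B, v ∉ A := fun v hv hva => (Finset.disjoint_left.1 hdisj) hva hv
  have hmemA : ∀ v, v ∉ B → v ∈ A := by
    intro v hv
    have := Finset.mem_univ v
    rw [← hcover, Finset.mem_union] at this
    tauto
  have hBA : ∀ i v, G.Adj (b i) v → v ∈ A := by
    intro i v h
    have hb := hbip (b i) v h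
    exact hmemA v (fun hvB => hnotA (b i) (hbmem i) (hb.2 hvB))
  have hAB : ∀ a ∈ A, ∀ v, G.Adj a v → v ∈ B := by
    intro a ha v h
    exact (hbip a v h).1 ha
  have hdeg : ∀ v, (G.neighborFinset v).card = 3 := by
    intro v
    rw [G.card_neighborFinset_eq_degree]; exact hreg v
  -- B is exactly the image of b
  have hBimg : B = Finset.univ.image b := by
    refine (Finset.eq_of_subset_of_card_le ?_ ?_).symm
    · intro v hv
      obtain ⟨i, _, rfl⟩ := Finset.mem_image.1 hv
      exact hbmem i
    · rw [Finset.card_image_of_injective _ hbinj, Finset.card_univ, Fintype.card_fin, hB]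
  -- |A| ≤ n via Hall on the A side
  have hAle : A.card ≤ n := by
    have hcond := hall_cond (fun a : {x // x ∈ A} => G.neighborFinset a.1) 3 (by norm_num)
      (fun a => le_of_eq (hdeg a.1).symm)
      (by
        intro v
        refine le_trans (Finset.card_le_card_of_injOn (fun a => a.1) ?_ ?_) (le_of_eq (hdeg v))
        · intro a ha
          simp only [Finset.mem_coe, Finset.mem_filter] at ha ⊢
          rw [SimpleGraph.mem_neighborFinset] at ha ⊢
          exact ha.2.symm
        · intro a _ a' _ h
          exact Subtype.ext h)
    obtain ⟨g, hginj, hgmem⟩ :=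
      (Finset.all_card_le_biUnion_card_iff_exists_injective _).1 hcond
    calc A.card = A.attach.card := Finset.card_attach.symm
    _ ≤ B.card := by
        refine Finset.card_le_card_of_injOn (fun a => g a) ?_ ?_
        · intro a _
          exact hAB a.1 a.2 (g a) ((SimpleGraph.mem_neighborFinset _ _ _).1 (hgmem a))
        · intro a _ a' _ h
          exact hginj h
    _ = n := hB
  -- counting: each v lies in at most 3 neighborhoods of b's
  have hcount3 : ∀ v : V, ((univ : Finset (Fin n)).filter
      (fun i => v ∈ G.neighborFinset (b i))).card ≤ 3 := by
    intro v
    refine le_trans (Finset.card_le_card_of_injOn b ?_ ?_) (le_of_eq (hdeg v))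
    · intro i hi
      simp only [Finset.mem_coe, Finset.mem_filter] at hi ⊢
      rw [SimpleGraph.mem_neighborFinset] at hi ⊢
      exact hi.2.symm
    · intro i _ i' _ h
      exact hbinj h
  -- first matching
  obtain ⟨m1, hm1inj, hm1mem⟩ := (Finset.all_card_le_biUnion_card_iff_exists_injective
    (fun i : Fin n => G.neighborFinset (b i))).1
    (hall_cond _ 3 (by norm_num) (fun i => le_of_eq (hdeg (b i)).symm) hcount3)
  have hm1A : ∀ i, m1 i ∈ A := fun i =>
    hBA i (m1 i) ((SimpleGraph.mem_neighborFinset _ _ _).1 (hm1mem i))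
  have hm1img : Finset.univ.image m1 = A := by
    refine Finset.eq_of_subset_of_card_le ?_ ?_
    · intro v hv
      obtain ⟨i, _, rfl⟩ := Finset.mem_image.1 hv
      exact hm1A i
    · rw [Finset.card_image_of_injective _ hm1inj, Finset.card_univ, Fintype.card_fin]
      exact hAle
  -- second matching from residual neighborhoods
  set t2 : Fin n → Finset V := fun i => (G.neighborFinset (b i)).erase (m1 i) with ht2
  have ht2card : ∀ i, (t2 i).card = 2 := by
    intro i
    rw [Finset.card_erase_of_mem (hm1mem i), hdeg]
  have hsubA : ∀ i, t2 i ⊆ A := by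
    intro i v hv
    exact hBA i v ((SimpleGraph.mem_neighborFinset _ _ _).1 (Finset.mem_of_mem_erase hv))
  have hcount2 : ∀ v : V, ((univ : Finset (Fin n)).filter (fun i => v ∈ t2 i)).card ≤ 2 := by
    intro v
    by_cases hvA : v ∈ A
    · obtain ⟨i0,icond, rfl⟩ := Finset.mem_image.1 (hm1img ▸ hvA)
      have hsub : (univ : Finset (Fin n)).filter (fun i => m1 i0 ∈ t2 i) ⊆
          ((univ : Finset (Fin n)).filter
            (fun i => m1 i0 ∈ G.neighborFinset (b i))).erase i0 := by
        intro i hi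
        rw [Finset.mem_filter] at hi
        have hne : m1 i0 ≠ m1 i := Finset.ne_of_mem_erase hi.2
        have hnb : m1 i0 ∈ G.neighborFinset (b i) := Finset.mem_of_mem_erase hi.2
        rw [Finset.mem_erase, Finset.mem_filter]
        exact ⟨fun h => hne (by rw [h]), Finset.mem_univ _, hnb⟩
      have hi0mem : i0 ∈ (univ : Finset (Fin n)).filter
          (fun i => m1 i0 ∈ G.neighborFinset (b i)) := by
        simp only [Finset.mem_filter]
        exact ⟨Finset.mem_univ _, hm1mem i0⟩
      have := Finset.card_le_card hsub
      rw [Finset.card_erase_of_mem hi0mem] at this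
      have h3 := hcount3 (m1 i0)
      omega
    · have : (univ : Finset (Fin n)).filter (fun i => v ∈ t2 i) = ∅ := by
        refine Finset.eq_empty_of_forall_notMem (fun i hi => ?_)
        simp only [Finset.mem_filter] at hi
        exact hvA (hsubA i hi.2)
      rw [this]; simp
  obtain ⟨m2, hm2inj, hm2mem⟩ := (Finset.all_card_le_biUnion_card_iff_exists_injective t2).1
    (hall_cond _ 2 (by norm_num) (fun i => le_of_eq (ht2card i).symm) hcount2)
  have hm2nb : ∀ i, m2 i ∈ G.neighborFinset (b i) :=
    fun i => Finset.mem_of_mem_erase (hm2mem i)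
  have hm2ne1 : ∀ i, m2 i ≠ m1 i := fun i => Finset.ne_of_mem_erase (hm2mem i)
  have hm2A : ∀ i, m2 i ∈ A := fun i => hsubA i (hm2mem i)
  have hm2img : Finset.univ.image m2 = A := by
    refine Finset.eq_of_subset_of_card_le ?_ ?_
    · intro v hv
      obtain ⟨i, _, rfl⟩ := Finset.mem_image.1 hv
      exact hm2A i
    · rw [Finset.card_image_of_injective _ hm2inj, Finset.card_univ, Fintype.card_fin]
      exact hAle
  -- third matching: the unique remaining neighbor
  set t3 : Fin n → Finset V := fun i => (t2 i).erase (m2 i) with ht3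
  have ht3card : ∀ i, (t3 i).card = 1 := by
    intro i
    rw [Finset.card_erase_of_mem (hm2mem i), ht2card]
  have hm3ex : ∀ i : Fin n, ∃ v, t3 i = {v} := fun i => Finset.card_eq_one.1 (ht3card i)
  choose m3 hm3spec using hm3ex
  have hm3mem : ∀ i, m3 i ∈ t3 i := by
    intro i; rw [hm3spec i]; exact Finset.mem_singleton_self _
  have hm3nb : ∀ i, m3 i ∈ G.neighborFinset (b i) :=
    fun i => Finset.mem_of_mem_erase (Finset.mem_of_mem_erase (hm3mem i))
  have hm3ne2 : ∀ i, m3 i ≠ m2 i := fun i => Finset.ne_of_mem_erase (hm3mem i)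
  have hm3ne1 : ∀ i, m3 i ≠ m1 i :=
    fun i => Finset.ne_of_mem_erase (Finset.mem_of_mem_erase (hm3mem i))
  have hm3A : ∀ i, m3 i ∈ A := fun i => hsubA i (Finset.mem_of_mem_erase (hm3mem i))
  -- m3 is injective
  have hm3inj : Function.Injective m3 := by
    intro i i' hii
    obtain ⟨i0, _, hi0⟩ := Finset.mem_image.1 (hm1img ▸ hm3A i)
    obtain ⟨j0, _, hj0⟩ := Finset.mem_image.1 (hm2img ▸ hm3A i)
    have hi0j0 : i0 ≠ j0 := by
      intro h
      exact hm2ne1 j0 (by rw [hj0, ← h, hi0])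
    have hi0F : i0 ∈ (univ : Finset (Fin n)).filter
        (fun j => m3 i ∈ G.neighborFinset (b j)) := by
      rw [Finset.mem_filter]
      exact ⟨Finset.mem_univ _, by rw [← hi0]; exact hm1mem i0⟩
    have hj0F : j0 ∈ ((univ : Finset (Fin n)).filter
        (fun j => m3 i ∈ G.neighborFinset (b j))).erase i0 := by
      rw [Finset.mem_erase, Finset.mem_filter]
      exact ⟨hi0j0.symm, Finset.mem_univ _, by rw [← hj0]; exact hm2nb j0⟩
    have hsub : (univ : Finset (Fin n)).filter (fun j => m3 i ∈ t3 j) ⊆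
        (((univ : Finset (Fin n)).filter
          (fun j => m3 i ∈ G.neighborFinset (b j))).erase i0).erase j0 := by
      intro x hx
      rw [Finset.mem_filter] at hx
      have hne2 : m3 i ≠ m2 x := Finset.ne_of_mem_erase hx.2
      have hne1 : m3 i ≠ m1 x := Finset.ne_of_mem_erase (Finset.mem_of_mem_erase hx.2)
      rw [Finset.mem_erase, Finset.mem_erase, Finset.mem_filter]
      exact ⟨fun h => hne2 (by rw [h, hj0]), fun h => hne1 (by rw [h, hi0]),
        Finset.mem_univ _, Finset.mem_of_mem_erase (Finset.mem_of_mem_erase hx.2)⟩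
    have hle : ((univ : Finset (Fin n)).filter (fun j => m3 i ∈ t3 j)).card ≤ 1 := by
      have h := Finset.card_le_card hsub
      rw [Finset.card_erase_of_mem hj0F, Finset.card_erase_of_mem hi0F] at h
      have h3 := hcount3 (m3 i)
      omega
    refine Finset.card_le_one.1 hle i ?_ i' ?_
    · rw [Finset.mem_filter]
      exact ⟨Finset.mem_univ _, hm3mem i⟩
    · rw [Finset.mem_filter]
      exact ⟨Finset.mem_univ _, hii ▸ hm3mem i'⟩
  have hm3img : Finset.univ.image m3 = A := by
    refine Finset.eq_of_subset_of_card_le ?_ ?_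
    · intro v hv
      obtain ⟨i, _, rfl⟩ := Finset.mem_image.1 hv
      exact hm3A i
    · rw [Finset.card_image_of_injective _ hm3inj, Finset.card_univ, Fintype.card_fin]
      exact hAle
  -- neighborhood description of b i
  have hNb : ∀ i, G.neighborFinset (b i) = {m1 i, m2 i, m3 i} := by
    intro i
    have h1 : insert (m2 i) (t3 i) = t2 i := Finset.insert_erase (hm2mem i)
    have h2 : insert (m1 i) (t2 i) = G.neighborFinset (b i) := Finset.insert_erase (hm1mem i)
    rw [← h2, ← h1, hm3spec i]
  -- unique preimages
  have hm1exu : ∀ v ∈ A, ∃! j, m1 j = v := by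
    intro v hv
    obtain ⟨j, _, hj⟩ := Finset.mem_image.1 (hm1img ▸ hv)
    exact ⟨j, hj, fun y hy => hm1inj (hy.trans hj.symm)⟩
  have hm2exu : ∀ v ∈ A, ∃! j, m2 j = v := by
    intro v hv
    obtain ⟨j, _, hj⟩ := Finset.mem_image.1 (hm2img ▸ hv)
    exact ⟨j, hj, fun y hy => hm2inj (hy.trans hj.symm)⟩
  have hm3exu : ∀ v ∈ A, ∃! j, m3 j = v := by
    intro v hv
    obtain ⟨j, _, hj⟩ := Finset.mem_image.1 (hm3img ▸ hv)
    exact ⟨j, hj, fun y hy => hm3inj (hy.trans hj.symm)⟩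
  -- the permutation c = m1⁻¹ ∘ m3
  set c : Fin n → Fin n := fun i => Fintype.choose (fun j => m1 j = m3 i)
    (hm1exu (m3 i) (hm3A i)) with hcdef
  have hc : ∀ i, m1 (c i) = m3 i := fun i =>
    Fintype.choose_spec (fun j => m1 j = m3 i) (hm1exu (m3 i) (hm3A i))
  have hcinj : Function.Injective c := by
    intro i i' h
    exact hm3inj (by rw [← hc, ← hc, h])
  have hcsurj : Function.Surjective c := Finite.surjective_of_injective hcinj
  -- edge equality analysis
  have hedgeq : ∀ (i j : Fin n) (x y : V), x ∈ A → y ∈ A →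
      (s(b i, x) = s(b j, y) ↔ (i = j ∧ x = y)) := by
    intro i j x y hx hy
    constructor
    · intro h
      rcases (Sym2.mk_eq_mk_iff (p := (b i, x)) (q := (b j, y))).1 h with h' | h'
      · exact ⟨hbinj (congrArg Prod.fst h'), congrArg Prod.snd h'⟩
      · have : b i = y := congrArg Prod.fst h'
        exact absurd (this ▸ hbmem i) (fun hh => hnotA y hh hy)
    · rintro ⟨rfl, rfl⟩; rfl
  -- the labeling
  set f : Sym2 V → ℕ := fun e => ∑ j : Fin n,
    ((if e = s(b j, m1 j) then 3 * j.val + 1 else 0) +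
     (if e = s(b j, m2 j) then 3 * (c j).val + 2 else 0) +
     (if e = s(b j, m3 j) then 3 * (n - 1 - (c j).val) + 3 else 0)) with hfdef
  have hne12 : ∀ i : Fin n, m1 i ≠ m2 i := fun i => (hm2ne1 i).symm
  -- evaluation lemmas
  have heval1 : ∀ i : Fin n, f s(b i, m1 i) = 3 * i.val + 1 := by
    intro i
    have hd1 : ¬ (s(b i, m1 i) = s(b i, m2 i)) := by
      intro h
      have h' := (hedgeq i i (m1 i) (m2 i) (hm1A i) (hm2A i)).1 h
      exact hne12 i h'.2
    have hd2 : ¬ (s(b i, m1 i) = s(b i, m3 i)) := by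
      intro h
      have h' := (hedgeq i i (m1 i) (m3 i) (hm1A i) (hm3A i)).1 h
      exact hm3ne1 i h'.2.symm
    simp only [hfdef]
    rw [Finset.sum_eq_single i]
    · rw [if_pos rfl]
      rw [if_neg hd1, if_neg hd2]
    · intro j _ hj
      have g1 : ¬ (s(b i, m1 i) = s(b j, m1 j)) := fun h =>
        hj ((hedgeq i j (m1 i) (m1 j) (hm1A i) (hm1A j)).1 h).1.symm
      have g2 : ¬ (s(b i, m1 i) = s(b j, m2 j)) := fun h =>
        hj ((hedgeq i j (m1 i) (m2 j) (hm1A i) (hm2A j)).1 h).1.symm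
      have g3 : ¬ (s(b i, m1 i) = s(b j, m3 j)) := fun h =>
        hj ((hedgeq i j (m1 i) (m3 j) (hm1A i) (hm3A j)).1 h).1.symm
      rw [if_neg g1, if_neg g2, if_neg g3]
      omega
    · intro h
      exact absurd (Finset.mem_univ i) h
  have heval2 : ∀ i : Fin n, f s(b i, m2 i) = 3 * (c i).val + 2 := by
    intro i
    have hd1 : ¬ (s(b i, m2 i) = s(b i, m1 i)) := by
      intro h
      have h' := (hedgeq i i (m2 i) (m1 i) (hm2A i) (hm1A i)).1 h
      exact hne12 i h'.2.symm
    have hd2 : ¬ (s(b i, m2 i) = s(b i, m3 i)) := by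
      intro h
      have h' := (hedgeq i i (m2 i) (m3 i) (hm2A i) (hm3A i)).1 h
      exact hm3ne2 i h'.2.symm
    simp only [hfdef]
    rw [Finset.sum_eq_single i]
    · rw [if_pos rfl]
      rw [if_neg hd1, if_neg hd2]
      omega
    · intro j _ hj
      have g1 : ¬ (s(b i, m2 i) = s(b j, m1 j)) := fun h =>
        hj ((hedgeq i j (m2 i) (m1 j) (hm2A i) (hm1A j)).1 h).1.symm
      have g2 : ¬ (s(b i, m2 i) = s(b j, m2 j)) := fun h =>
        hj ((hedgeq i j (m2 i) (m2 j) (hm2A i) (hm2A j)).1 h).1.symm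
      have g3 : ¬ (s(b i, m2 i) = s(b j, m3 j)) := fun h =>
        hj ((hedgeq i j (m2 i) (m3 j) (hm2A i) (hm3A j)).1 h).1.symm
      rw [if_neg g1, if_neg g2, if_neg g3]
      omega
    · intro h
      exact absurd (Finset.mem_univ i) h
  have heval3 : ∀ i : Fin n, f s(b i, m3 i) = 3 * (n - 1 - (c i).val) + 3 := by
    intro i
    have hd1 : ¬ (s(b i, m3 i) = s(b i, m1 i)) := by
      intro h
      have h' := (hedgeq i i (m3 i) (m1 i) (hm3A i) (hm1A i)).1 h
      exact hm3ne1 i h'.2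
    have hd2 : ¬ (s(b i, m3 i) = s(b i, m2 i)) := by
      intro h
      have h' := (hedgeq i i (m3 i) (m2 i) (hm3A i) (hm2A i)).1 h
      exact hm3ne2 i h'.2
    simp only [hfdef]
    rw [Finset.sum_eq_single i]
    · rw [if_pos rfl]
      rw [if_neg hd1, if_neg hd2]
      omega
    · intro j _ hj
      have g1 : ¬ (s(b i, m3 i) = s(b j, m1 j)) := fun h =>
        hj ((hedgeq i j (m3 i) (m1 j) (hm3A i) (hm1A j)).1 h).1.symm
      have g2 : ¬ (s(b i, m3 i) = s(b j, m2 j)) := fun h =>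
        hj ((hedgeq i j (m3 i) (m2 j) (hm3A i) (hm2A j)).1 h).1.symm
      have g3 : ¬ (s(b i, m3 i) = s(b j, m3 j)) := fun h =>
        hj ((hedgeq i j (m3 i) (m3 j) (hm3A i) (hm3A j)).1 h).1.symm
      rw [if_neg g1, if_neg g2, if_neg g3]
      omega
    · intro h
      exact absurd (Finset.mem_univ i) h
  -- edge characterization
  have hadj1 : ∀ i : Fin n, G.Adj (b i) (m1 i) :=
    fun i => (SimpleGraph.mem_neighborFinset _ _ _).1 (hm1mem i)
  have hadj2 : ∀ i : Fin n, G.Adj (b i) (m2 i) :=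
    fun i => (SimpleGraph.mem_neighborFinset _ _ _).1 (hm2nb i)
  have hadj3 : ∀ i : Fin n, G.Adj (b i) (m3 i) :=
    fun i => (SimpleGraph.mem_neighborFinset _ _ _).1 (hm3nb i)
  have hEdgeChar : ∀ e ∈ G.edgeFinset,
      ∃ i : Fin n, e = s(b i, m1 i) ∨ e = s(b i, m2 i) ∨ e = s(b i, m3 i) := by
    have claim : ∀ u v : V, G.Adj u v → u ∈ B →
        ∃ i : Fin n, s(u, v) = s(b i, m1 i) ∨ s(u, v) = s(b i, m2 i) ∨ s(u, v) = s(b i, m3 i) := by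
      intro u v huv huB
      obtain ⟨i, _, rfl⟩ := Finset.mem_image.1 (hBimg ▸ huB)
      have hv : v ∈ G.neighborFinset (b i) := (SimpleGraph.mem_neighborFinset _ _ _).2 huv
      rw [hNb i] at hv
      simp only [Finset.mem_insert, Finset.mem_singleton] at hv
      rcases hv with rfl | rfl | rfl
      · exact ⟨i, Or.inl rfl⟩
      · exact ⟨i, Or.inr (Or.inl rfl)⟩
      · exact ⟨i, Or.inr (Or.inr rfl)⟩
    intro e he
    rw [SimpleGraph.mem_edgeFinset] at he
    induction e with
    | _ u v =>
      have huv : G.Adj u v := he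
      by_cases huB : u ∈ B
      · exact claim u v huv huB
      · have huA : u ∈ A := hmemA u huB
        have hvB : v ∈ B := hAB u huA v huv
        obtain ⟨i, hi⟩ := claim v u huv.symm hvB
        exact ⟨i, by rwa [Sym2.eq_swap] at hi⟩
  -- vertex sums at B
  have hsumB : ∀ i : Fin n, vertexSum G f (b i) = 3 * n + 3 * (i.val + 1) := by
    intro i
    rw [vertexSum_eq_sum_neighbors, hNb i]
    have h1 : m1 i ∉ ({m2 i, m3 i} : Finset V) := by
      simp only [Finset.mem_insert, Finset.mem_singleton]
      push_neg
      exact ⟨fun h => hne12 i h, fun h => hm3ne1 i h.symm⟩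
    have h2 : m2 i ∉ ({m3 i} : Finset V) := by
      simp only [Finset.mem_singleton]
      exact fun h => hm3ne2 i h.symm
    rw [Finset.sum_insert h1, Finset.sum_insert h2, Finset.sum_singleton]
    rw [heval1 i, heval2 i, heval3 i]
    have hci : (c i).val < n := (c i).isLt
    have hii : i.val < n := i.isLt
    omega
  -- vertex sums at A
  have hsumA : ∀ i2 : Fin n, vertexSum G f (m2 i2) = 3 * n + 3 * ((c i2).val + 1) := by
    intro i2
    obtain ⟨i1, _, hi1⟩ := Finset.mem_image.1 (hm1img ▸ hm2A i2)
    obtain ⟨i3, _, hi3⟩ := Finset.mem_image.1 (hm3img ▸ hm2A i2)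
    have hd12 : i1 ≠ i2 := by
      intro h
      exact hm2ne1 i2 (by rw [← hi1, h])
    have hd13 : i1 ≠ i3 := by
      intro h
      exact hm3ne1 i3 (by rw [hi3, ← hi1, h])
    have hd23 : i2 ≠ i3 := by
      intro h
      exact hm3ne2 i3 (by rw [hi3, h])
    have hNa : G.neighborFinset (m2 i2) = {b i1, b i2, b i3} := by
      refine (Finset.eq_of_subset_of_card_le ?_ ?_).symm
      · intro w hw
        simp only [Finset.mem_insert, Finset.mem_singleton] at hw
        rw [SimpleGraph.mem_neighborFinset]
        rcases hw with rfl | rfl | rfl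
        · exact (hi1 ▸ hadj1 i1).symm
        · exact (hadj2 i2).symm
        · exact (hi3 ▸ hadj3 i3).symm
      · rw [hdeg]
        rw [Finset.card_insert_of_notMem, Finset.card_insert_of_notMem,
          Finset.card_singleton]
        · simp only [Finset.mem_singleton]
          exact fun h => hd23 (hbinj h)
        · simp only [Finset.mem_insert, Finset.mem_singleton]
          push_neg
          exact ⟨fun h => hd12 (hbinj h), fun h => hd13 (hbinj h)⟩
    rw [vertexSum_eq_sum_neighbors, hNa]
    have hb1 : b i1 ∉ ({b i2, b i3} : Finset V) := by
      simp only [Finset.mem_insert, Finset.mem_singleton]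
      push_neg
      exact ⟨fun h => hd12 (hbinj h), fun h => hd13 (hbinj h)⟩
    have hb2 : b i2 ∉ ({b i3} : Finset V) := by
      simp only [Finset.mem_singleton]
      exact fun h => hd23 (hbinj h)
    rw [Finset.sum_insert hb1, Finset.sum_insert hb2, Finset.sum_singleton]
    have e1 : s(m2 i2, b i1) = s(b i1, m1 i1) := by rw [Sym2.eq_swap, hi1]
    have e2 : s(m2 i2, b i2) = s(b i2, m2 i2) := Sym2.eq_swap
    have e3 : s(m2 i2, b i3) = s(b i3, m3 i3) := by rw [Sym2.eq_swap, hi3]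
    rw [e1, e2, e3, heval1 i1, heval2 i2, heval3 i3]
    have hci3 : c i3 = i1 := by
      refine hm1inj ?_
      rw [hc i3, hi3, ← hi1]
    rw [hci3]
    have h1 : i1.val < n := i1.isLt
    have h2 : (c i2).val < n := (c i2).isLt
    omega
  -- membership of constructed edges
  have hmem1 : ∀ i : Fin n, s(b i, m1 i) ∈ G.edgeFinset := by
    intro i
    rw [SimpleGraph.mem_edgeFinset]
    exact hadj1 i
  have hmem2 : ∀ i : Fin n, s(b i, m2 i) ∈ G.edgeFinset := by
    intro i
    rw [SimpleGraph.mem_edgeFinset]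
    exact hadj2 i
  have hmem3 : ∀ i : Fin n, s(b i, m3 i) ∈ G.edgeFinset := by
    intro i
    rw [SimpleGraph.mem_edgeFinset]
    exact hadj3 i
  refine ⟨f, ⟨?_, ?_, ?_⟩, ?_, ?_⟩
  · -- MapsTo
    intro e he
    rw [Finset.mem_coe] at he
    obtain ⟨i, hi⟩ := hEdgeChar e he
    have hii : i.val < n := i.isLt
    have hci : (c i).val < n := (c i).isLt
    simp only [Finset.coe_Icc, Set.mem_Icc]
    rcases hi with rfl | rfl | rfl
    · rw [heval1 i]; omega
    · rw [heval2 i]; omega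
    · rw [heval3 i]; omega
  · -- InjOn
    intro e he e' he' hfe
    rw [Finset.mem_coe] at he he'
    obtain ⟨i, hi⟩ := hEdgeChar e he
    obtain ⟨i', hi'⟩ := hEdgeChar e' he'
    have hii : i.val < n := i.isLt
    have hci : (c i).val < n := (c i).isLt
    have hii' : i'.val < n := i'.isLt
    have hci' : (c i').val < n := (c i').isLt
    rcases hi with rfl | rfl | rfl <;> rcases hi' with rfl | rfl | rfl <;>
      simp only [heval1, heval2, heval3] at hfe
    · have : i = i' := Fin.val_injective (by omega)
      rw [this]
    · exact absurd hfe (by omega)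
    · exact absurd hfe (by omega)
    · exact absurd hfe (by omega)
    · have : c i = c i' := Fin.val_injective (by omega)
      rw [hcinj this]
    · exact absurd hfe (by omega)
    · exact absurd hfe (by omega)
    · exact absurd hfe (by omega)
    · have : c i = c i' := Fin.val_injective (by omega)
      rw [hcinj this]
  · -- SurjOn
    intro y hy
    rw [Finset.mem_coe, Finset.mem_Icc] at hy
    have h3 : y % 3 = 0 ∨ y % 3 = 1 ∨ y % 3 = 2 := by omega
    rcases h3 with h3 | h3 | h3
    · have hq : n - y / 3 < n := by omega
      obtain ⟨j, hj⟩ := hcsurj ⟨n - y / 3, hq⟩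
      refine ⟨s(b j, m3 j), Finset.mem_coe.2 (hmem3 j), ?_⟩
      rw [heval3 j, hj]
      show 3 * (n - 1 - (n - y / 3)) + 3 = y
      omega
    · have hq : y / 3 < n := by omega
      refine ⟨s(b ⟨y / 3, hq⟩, m1 ⟨y / 3, hq⟩), Finset.mem_coe.2 (hmem1 _), ?_⟩
      rw [heval1]
      show 3 * (y / 3) + 1 = y
      omega
    · have hq : y / 3 < n := by omega
      obtain ⟨j, hj⟩ := hcsurj ⟨y / 3, hq⟩
      refine ⟨s(b j, m2 j), Finset.mem_coe.2 (hmem2 j), ?_⟩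
      rw [heval2 j, hj]
      show 3 * (y / 3) + 2 = y
      omega
  · -- vertex sums at B
    exact hsumB
  · -- unique vertex in A with each sum
    intro i
    obtain ⟨j, hj⟩ := hcsurj i
    refine ⟨m2 j, ⟨hm2A j, by rw [hsumA j, hj]⟩, ?_⟩
    rintro a' ⟨ha'A, ha'sum⟩
    obtain ⟨j', _, hj'⟩ := Finset.mem_image.1 (hm2img ▸ ha'A)
    rw [← hj', hsumA j'] at ha'sum
    have hji : c j' = i := Fin.val_injective (by omega)
    have hjj : j' = j := hcinj (hji.trans hj.symm)
    rw [← hj', hjj]
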